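/- (ER for τ-nice sampling.) Assume n ≥ 2, each f_i is L_i-smooth and bounded below with f_i* = inf_x f_i(x), and f attains its minimum at some point x*. Let 1 ≤ τ ≤ n and let 𝒟 be the τ-nice sampling distribution: v = (n/τ)∑_{i∈S} e_i where S is a uniformly random subset of {1,…,n} of size τ. Set σ* = (1/n)∑_{i=1}^n (f_i(x*) − f_i*), A = ((n−τ)/(τ(n−1)))·L_max, and B = n(τ−1)/(τ(n−1)). Then for all x ∈ ℝ^d, E_v‖g(x,v)‖² ≤ 2A·(f(x) − f^inf) + B·‖∇f(x)‖² + 2A·σ*; i.e., ER holds with constants A = (n−τ)L_max/(τ(n−1)), B = n(τ−1)/(τ(n−1)), C = 2Aσ*. -/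

import Mathlib

open MeasureTheory

noncomputable section

/-- The finite-sum objective `f(x) = (1/n) ∑ i, f i x`. -/
def favg {n d : ℕ} (f : Fin n → EuclideanSpace ℝ (Fin d) → ℝ)
    (x : EuclideanSpace ℝ (Fin d)) : ℝ :=
  (n : ℝ)⁻¹ * ∑ i, f i x

/-- The stochastic gradient `g(x, v) = (1/n) ∑ i, v i • ∇ f i x`. -/
def sgrad {n d : ℕ} (f : Fin n → EuclideanSpace ℝ (Fin d) → ℝ)
    (x : EuclideanSpace ℝ (Fin d)) (v : Fin n → ℝ) : EuclideanSpace ℝ (Fin d) :=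
  (n : ℝ)⁻¹ • ∑ i, v i • gradient (f i) x

lemma descent_lemma {E : Type*} [NormedAddCommGroup E] [InnerProductSpace ℝ E] [CompleteSpace E]
    {f : E → ℝ} {L : ℝ} (hL : 0 ≤ L) (hdiff : Differentiable ℝ f)
    (hlip : LipschitzWith L.toNNReal (gradient f)) (x y : E) :
    f y ≤ f x + inner ℝ (gradient f x) (y - x) + L / 2 * ‖y - x‖ ^ 2 := by
  set h := y - x with hh
  set φ' : ℝ → ℝ := fun t => inner ℝ (gradient f (x + t • h)) h with hφ'
  have hφ : ∀ t : ℝ, HasDerivAt (fun t : ℝ => f (x + t • h)) (φ' t) t := by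
    intro t
    have hline : HasDerivAt (fun t : ℝ => x + t • h) h t := by
      simpa using ((hasDerivAt_id t).smul_const h).const_add x
    have hf : HasFDerivAt f (InnerProductSpace.toDual ℝ E (gradient f (x + t • h))) (x + t • h) :=
      ((hdiff _).hasGradientAt).hasFDerivAt
    simpa [hφ', InnerProductSpace.toDual_apply_apply, Function.comp_def] using hf.comp_hasDerivAt t hline
  have hcont : Continuous φ' := by
    apply Continuous.inner
    · exact hlip.continuous.comp (by continuity)
    · exact continuous_const
  have key : f y - f x = ∫ t in (0:ℝ)..1, φ' t := by
    have := intervalIntegral.integral_eq_sub_of_hasDerivAt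
      (f := fun t : ℝ => f (x + t • h)) (f' := φ') (a := (0:ℝ)) (b := 1)
      (fun t _ => hφ t) (hcont.intervalIntegrable 0 1)
    simp only [one_smul, zero_smul, add_zero] at this
    rw [this]
    have exy : x + h = y := by rw [hh]; abel
    rw [exy]
  have hbound : ∀ t ∈ Set.Icc (0:ℝ) 1, φ' t ≤ inner ℝ (gradient f x) h + (L * ‖h‖ ^ 2) * t := by
    intro t ht
    have h1 : φ' t - inner ℝ (gradient f x) h = inner ℝ (gradient f (x + t • h) - gradient f x) h := by
      rw [inner_sub_left]
    have h2 : inner ℝ (gradient f (x + t • h) - gradient f x) h ≤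
        ‖gradient f (x + t • h) - gradient f x‖ * ‖h‖ := real_inner_le_norm _ _
    have h3 : ‖gradient f (x + t • h) - gradient f x‖ ≤ L * (t * ‖h‖) := by
      have hdd := hlip.dist_le_mul (x + t • h) x
      rw [dist_eq_norm, dist_eq_norm] at hdd
      have e : x + t • h - x = t • h := by abel
      rw [e, norm_smul, Real.norm_eq_abs, abs_of_nonneg ht.1,
        Real.coe_toNNReal L hL] at hdd
      linarith [hdd]
    nlinarith [norm_nonneg h, ht.1]
  have hrhs : ∫ t in (0:ℝ)..1, (inner ℝ (gradient f x) h + (L * ‖h‖ ^ 2) * t : ℝ)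
      = inner ℝ (gradient f x) h + L / 2 * ‖h‖ ^ 2 := by
    rw [intervalIntegral.integral_add (intervalIntegrable_const)
      ((intervalIntegral.intervalIntegrable_id.const_mul _))]
    rw [intervalIntegral.integral_const_mul, integral_id]
    simp; ring
  have hmono : ∫ t in (0:ℝ)..1, φ' t ≤
      ∫ t in (0:ℝ)..1, (inner ℝ (gradient f x) h + (L * ‖h‖ ^ 2) * t : ℝ) := by
    apply intervalIntegral.integral_mono_on (by norm_num)
      (hcont.intervalIntegrable 0 1)
      ((continuous_const.add (continuous_const.mul continuous_id)).intervalIntegrable 0 1)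
    exact hbound
  rw [hrhs] at hmono
  linarith [key ▸ hmono]

lemma grad_sq_le_aux {E : Type*} [NormedAddCommGroup E] [InnerProductSpace ℝ E]
    [CompleteSpace E] [Nonempty E]
    {f : E → ℝ} {L Lmax : ℝ} (hL : 0 ≤ L) (hLm : L ≤ Lmax)
    (hdiff : Differentiable ℝ f)
    (hlip : LipschitzWith L.toNNReal (gradient f))
    (hbdd : BddBelow (Set.range f)) (x : E) :
    ‖gradient f x‖ ^ 2 ≤ 2 * Lmax * (f x - ⨅ y, f y) := by
  set g := gradient f x with hg
  set m := ⨅ y, f y with hm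
  have hfx : m ≤ f x := ciInf_le hbdd x
  have key : ∀ t : ℝ, 0 ≤ t → t * ‖g‖ ^ 2 - L * t ^ 2 / 2 * ‖g‖ ^ 2 ≤ f x - m := by
    intro t ht
    have h1 : f (x - t • g) ≤ f x + inner ℝ g (x - t • g - x) + L / 2 * ‖x - t • g - x‖ ^ 2 :=
      descent_lemma hL hdiff hlip x (x - t • g)
    have e : x - t • g - x = -(t • g) := by abel
    rw [e] at h1
    have e2 : (inner ℝ g (-(t • g)) : ℝ) = -(t * ‖g‖ ^ 2) := by
      rw [inner_neg_right, inner_smul_right, real_inner_self_eq_norm_sq]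
      try ring
    have e3 : ‖-(t • g)‖ ^ 2 = t ^ 2 * ‖g‖ ^ 2 := by
      rw [norm_neg, norm_smul, Real.norm_eq_abs, mul_pow, sq_abs]
    rw [e2, e3] at h1
    have h2 : m ≤ f (x - t • g) := ciInf_le hbdd _
    nlinarith
  rcases lt_or_eq_of_le (hL.trans hLm) with hpos | hzero
  · have := key (1 / Lmax) (by positivity)
    have h2 : ‖g‖ ^ 2 / (2 * Lmax) ≤ f x - m := by
      have hLg : L * (1/Lmax)^2 / 2 * ‖g‖^2 ≤ Lmax * (1/Lmax)^2 / 2 * ‖g‖^2 := by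
        nlinarith [sq_nonneg ‖g‖, mul_nonneg (mul_nonneg (sub_nonneg.2 hLm) (sq_nonneg (1/Lmax))) (sq_nonneg ‖g‖)]
      have e : (1/Lmax) * ‖g‖^2 - Lmax * (1/Lmax)^2 / 2 * ‖g‖^2 = ‖g‖^2 / (2 * Lmax) := by
        field_simp; ring
      linarith
    rw [div_le_iff₀ (by positivity)] at h2
    linarith
  · -- Lmax = 0, hence L = 0
    have hL0 : L = 0 := le_antisymm (hLm.trans hzero.symm.le) hL
    have hg0 : ‖g‖ ^ 2 ≤ 0 := by
      by_contra hc
      push_neg at hc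
      have h4 := key ((f x - m + 1) / ‖g‖ ^ 2) (div_nonneg (by linarith) (by positivity))
      rw [hL0] at h4
      have : (f x - m + 1) / ‖g‖ ^ 2 * ‖g‖ ^ 2 = f x - m + 1 := by
        exact div_mul_cancel₀ _ hc.ne'
      nlinarith
    rw [← hzero]
    nlinarith [sq_nonneg ‖g‖]

lemma count_subsets_containing {α : Type*} [Fintype α] [DecidableEq α]
    (t : Finset α) (τ : ℕ) (ht : t.card ≤ τ) :
    ((Finset.powersetCard τ (Finset.univ : Finset α)).filter (fun S => t ⊆ S)).card
      = (Fintype.card α - t.card).choose (τ - t.card) := by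
  have hc : Fintype.card α - t.card = ((Finset.univ : Finset α) \ t).card := by
    rw [Finset.card_sdiff_of_subset (Finset.subset_univ t), Finset.card_univ]
  rw [hc, ← Finset.card_powersetCard]
  apply Finset.card_nbij' (fun S => S \ t) (fun R => R ∪ t)
  · intro S hS
    simp only [Finset.mem_coe, Finset.mem_filter, Finset.mem_powersetCard] at hS ⊢
    obtain ⟨⟨hsub, hcard⟩, hts⟩ := hS
    exact ⟨Finset.sdiff_subset_sdiff hsub le_rfl, by rw [Finset.card_sdiff_of_subset hts, hcard]⟩
  · intro R hR
    rw [Finset.mem_coe, Finset.mem_powersetCard] at hR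
    obtain ⟨hsub, hcard⟩ := hR
    have hdisj : Disjoint R t := Finset.disjoint_of_subset_left hsub (Finset.sdiff_disjoint)
    refine Finset.mem_filter.2 ⟨Finset.mem_powersetCard.2 ⟨Finset.subset_univ _, ?_⟩,
      Finset.subset_union_right⟩
    rw [Finset.card_union_of_disjoint hdisj, hcard]
    omega
  · intro S hS
    simp only [Finset.mem_coe, Finset.mem_filter] at hS
    exact Finset.sdiff_union_of_subset hS.2
  · intro R hR
    rw [Finset.mem_coe, Finset.mem_powersetCard] at hR
    have hdisj : Disjoint R t := Finset.disjoint_of_subset_left hR.1 (Finset.sdiff_disjoint)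
    exact Finset.union_sdiff_cancel_right hdisj

lemma sum_powersetCard_norm_sq {E : Type*} [NormedAddCommGroup E] [InnerProductSpace ℝ E]
    {n : ℕ} (a : Fin n → E) (τ : ℕ) (K1 K2 : ℕ)
    (hcount : ∀ i j : Fin n,
      ((Finset.powersetCard τ (Finset.univ : Finset (Fin n))).filter
        (fun S => i ∈ S ∧ j ∈ S)).card = if i = j then K1 else K2) :
    ∑ S ∈ Finset.powersetCard τ (Finset.univ : Finset (Fin n)), ‖∑ i ∈ S, a i‖ ^ 2
      = ((K1 : ℝ) - K2) * ∑ i, ‖a i‖ ^ 2 + (K2 : ℝ) * ‖∑ i, a i‖ ^ 2 := by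
  set 𝒮 := Finset.powersetCard τ (Finset.univ : Finset (Fin n)) with h𝒮
  have expand : ∀ S ∈ 𝒮, ‖∑ i ∈ S, a i‖ ^ 2
      = ∑ i, ∑ j, (if i ∈ S ∧ j ∈ S then (inner ℝ (a i) (a j) : ℝ) else 0) := by
    intro S _
    have e1 : ‖∑ i ∈ S, a i‖ ^ 2 = ∑ i ∈ S, ∑ j ∈ S, (inner ℝ (a i) (a j) : ℝ) := by
      rw [← real_inner_self_eq_norm_sq, sum_inner]
      exact Finset.sum_congr rfl fun i _ => inner_sum _ _ _
    have e2 : ∀ g : Fin n → ℝ, ∑ i ∈ S, g i = ∑ i, if i ∈ S then g i else 0 := by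
      intro g; rw [Finset.sum_ite_mem, Finset.univ_inter]
    rw [e1, e2 (fun i => ∑ j ∈ S, (inner ℝ (a i) (a j) : ℝ))]
    refine Finset.sum_congr rfl fun i _ => ?_
    simp only [ite_and]
    split_ifs with h
    · exact e2 _
    · simp
  rw [Finset.sum_congr rfl expand, Finset.sum_comm]
  have swap2 : ∀ i : Fin n, ∑ S ∈ 𝒮, ∑ j, (if i ∈ S ∧ j ∈ S then (inner ℝ (a i) (a j) : ℝ) else 0)
      = ∑ j, ((if i = j then (K1 : ℝ) else K2) * inner ℝ (a i) (a j)) := by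
    intro i
    rw [Finset.sum_comm]
    refine Finset.sum_congr rfl fun j _ => ?_
    rw [← Finset.sum_filter, Finset.sum_const, nsmul_eq_mul, hcount i j]
    split_ifs <;> simp
  rw [Finset.sum_congr rfl (fun i _ => swap2 i)]
  have split : ∀ i : Fin n, ∑ j, ((if i = j then (K1 : ℝ) else K2) * inner ℝ (a i) (a j))
      = (K2 : ℝ) * inner ℝ (a i) (∑ j, a j) + ((K1 : ℝ) - K2) * ‖a i‖ ^ 2 := by
    intro i
    have : ∀ j : Fin n, (if i = j then (K1 : ℝ) else K2) * inner ℝ (a i) (a j)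
        = (K2 : ℝ) * inner ℝ (a i) (a j)
          + (if i = j then ((K1 : ℝ) - K2) * inner ℝ (a i) (a j) else 0) := by
      intro j; split_ifs <;> ring
    rw [Finset.sum_congr rfl (fun j _ => this j), Finset.sum_add_distrib,
      Finset.sum_ite_eq, ← Finset.mul_sum, ← inner_sum]
    simp [real_inner_self_eq_norm_sq]
  rw [Finset.sum_congr rfl (fun i _ => split i), Finset.sum_add_distrib, ← Finset.mul_sum,
    ← Finset.mul_sum, ← sum_inner, real_inner_self_eq_norm_sq]
  ring

lemma integrable_dirac_of_sm {α E : Type*} [MeasurableSpace α] [MeasurableSingletonClass α]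
    [NormedAddCommGroup E] {f : α → E} (hf : MeasureTheory.StronglyMeasurable f) (a : α) :
    MeasureTheory.Integrable f (Measure.dirac a) := by
  refine ⟨hf.aestronglyMeasurable, ?_⟩
  simp only [MeasureTheory.HasFiniteIntegral]
  rw [lintegral_dirac]
  exact ENNReal.coe_lt_top

lemma gradient_favg {n d : ℕ} (f : Fin n → EuclideanSpace ℝ (Fin d) → ℝ)
    (hdiff : ∀ i, Differentiable ℝ (f i)) (x : EuclideanSpace ℝ (Fin d)) :
    gradient (favg f) x = (n : ℝ)⁻¹ • ∑ i, gradient (f i) x := by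
  have hF : HasFDerivAt (favg f)
      ((n : ℝ)⁻¹ • ∑ i, InnerProductSpace.toDual ℝ _ (gradient (f i) x)) x := by
    have hs : HasFDerivAt (fun y => ∑ i, f i y)
        (∑ i, InnerProductSpace.toDual ℝ _ (gradient (f i) x)) x :=
      HasFDerivAt.fun_sum (fun i _ => ((hdiff i x).hasGradientAt).hasFDerivAt)
    have := hs.const_mul ((n : ℝ)⁻¹)
    exact this
  have hG := hasFDerivAt_iff_hasGradientAt.1 hF
  rw [hG.gradient]
  rw [_root_.map_smul, _root_.map_sum]
  congr 1
  refine Finset.sum_congr rfl fun i _ => ?_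
  exact (InnerProductSpace.toDual ℝ _).symm_apply_apply _

lemma ratio1 {n τ : ℕ} (h1 : 1 ≤ τ) (h2 : τ ≤ n) :
    (n : ℝ) * ((n - 1).choose (τ - 1) : ℕ) = (n.choose τ : ℝ) * τ := by
  have h := Nat.add_one_mul_choose_eq (n - 1) (τ - 1)
  have e1 : n - 1 + 1 = n := by omega
  have e2 : τ - 1 + 1 = τ := by omega
  rw [e1, e2] at h
  exact_mod_cast h

lemma ratio2 {n τ : ℕ} (hn : 2 ≤ n) (h1 : 1 ≤ τ) (h2 : τ ≤ n) :
    (n : ℝ) * ((n : ℝ) - 1) * ((if τ = 1 then 0 else (n - 2).choose (τ - 2) : ℕ) : ℝ)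
      = (n.choose τ : ℝ) * τ * ((τ : ℝ) - 1) := by
  by_cases hτ : τ = 1
  · simp [hτ]
  · have hτ2 : 2 ≤ τ := by omega
    rw [if_neg hτ]
    have h := Nat.add_one_mul_choose_eq (n - 2) (τ - 2)
    have e1 : n - 2 + 1 = n - 1 := by omega
    have e2 : τ - 2 + 1 = τ - 1 := by omega
    rw [e1, e2] at h
    -- h : (n-1) * (n-2).choose (τ-2) = (n-1).choose (τ-1) * (τ-1)
    have hr1 := ratio1 h1 h2
    have hcast : ((n : ℝ) - 1) * ((n - 2).choose (τ - 2) : ℕ)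
        = ((n - 1).choose (τ - 1) : ℝ) * ((τ : ℝ) - 1) := by
      have hn1 : ((n - 1 : ℕ) : ℝ) = (n : ℝ) - 1 := by
        push_cast [Nat.cast_sub (by omega : 1 ≤ n)]; ring
      have hτ1 : ((τ - 1 : ℕ) : ℝ) = (τ : ℝ) - 1 := by
        push_cast [Nat.cast_sub h1]; ring
      rw [← hn1, ← hτ1]
      exact_mod_cast h
    calc (n : ℝ) * ((n : ℝ) - 1) * ((n - 2).choose (τ - 2) : ℕ)
        = (n : ℝ) * (((n : ℝ) - 1) * ((n - 2).choose (τ - 2) : ℕ)) := by ring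
      _ = (n : ℝ) * (((n - 1).choose (τ - 1) : ℝ) * ((τ : ℝ) - 1)) := by rw [hcast]
      _ = ((n : ℝ) * ((n - 1).choose (τ - 1) : ℕ)) * ((τ : ℝ) - 1) := by push_cast; ring
      _ = (n.choose τ : ℝ) * τ * ((τ : ℝ) - 1) := by rw [ratio1 h1 h2]

lemma hcount_tau_nice {n : ℕ} (τ : ℕ) (hτ1 : 1 ≤ τ) (hτn : τ ≤ n) (i j : Fin n) :
    ((Finset.powersetCard τ (Finset.univ : Finset (Fin n))).filter
      (fun S => i ∈ S ∧ j ∈ S)).card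
      = if i = j then (n - 1).choose (τ - 1)
        else (if τ = 1 then 0 else (n - 2).choose (τ - 2)) := by
  by_cases hij : i = j
  · subst hij
    rw [if_pos rfl]
    have he : (Finset.powersetCard τ (Finset.univ : Finset (Fin n))).filter
        (fun S => i ∈ S ∧ i ∈ S)
        = (Finset.powersetCard τ (Finset.univ : Finset (Fin n))).filter
          (fun S => ({i} : Finset (Fin n)) ⊆ S) := by
      apply Finset.filter_congr; intro S _; simp
    rw [he, count_subsets_containing _ _ (by simpa using hτ1)]
    simp [Fintype.card_fin]
  · rw [if_neg hij]
    by_cases hτ : τ = 1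
    · rw [if_pos hτ]
      rw [Finset.card_eq_zero, Finset.filter_eq_empty_iff]
      intro S hS
      rw [Finset.mem_powersetCard] at hS
      rintro ⟨hi, hj⟩
      obtain ⟨a, ha⟩ := Finset.card_eq_one.1 (by rw [hS.2, hτ])
      rw [ha, Finset.mem_singleton] at hi hj
      exact hij (hi.trans hj.symm)
    · rw [if_neg hτ]
      have he : (Finset.powersetCard τ (Finset.univ : Finset (Fin n))).filter
          (fun S => i ∈ S ∧ j ∈ S)
          = (Finset.powersetCard τ (Finset.univ : Finset (Fin n))).filter
            (fun S => ({i, j} : Finset (Fin n)) ⊆ S) := by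
        apply Finset.filter_congr; intro S _
        simp [Finset.insert_subset_iff]
      have hcard2 : ({i, j} : Finset (Fin n)).card = 2 := Finset.card_pair hij
      rw [he, count_subsets_containing _ _ (by rw [hcard2]; omega)]
      rw [hcard2, Fintype.card_fin]

/-- **Proposition (ER for τ-nice sampling), with
`A = (n−τ)·Lmax/(τ(n−1))`, `B = n(τ−1)/(τ(n−1))`, `C = 2·A·σ*`.**
The `τ`-nice distribution is uniform over the `n.choose τ` vectors `(n/τ)·∑_{i∈S} e i`,
`S ⊆ {1,…,n}` of cardinality `τ`. -/
theorem ER_of_tau_nice_sampling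
    {d n : ℕ} (hn : 2 ≤ n)
    (f : Fin n → EuclideanSpace ℝ (Fin d) → ℝ)
    (L : Fin n → ℝ) (hLnonneg : ∀ i, 0 ≤ L i)
    (hdiff : ∀ i, Differentiable ℝ (f i))
    (hsmooth : ∀ i, LipschitzWith (L i).toNNReal (gradient (f i)))
    (hbelow : ∀ i, BddBelow (Set.range (f i)))
    (Lmax : ℝ) (hLmax_ub : ∀ i, L i ≤ Lmax) (hLmax_mem : ∃ i, L i = Lmax)
    (xstar : EuclideanSpace ℝ (Fin d)) (hmin : ∀ y, favg f xstar ≤ favg f y)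
    -- the batch size
    (τ : ℕ) (hτ1 : 1 ≤ τ) (hτn : τ ≤ n)
    -- the τ-nice sampling distribution
    (𝒟 : Measure (Fin n → ℝ))
    (h𝒟 : 𝒟 = ((n.choose τ : ENNReal))⁻¹ •
      ∑ S ∈ Finset.powersetCard τ (Finset.univ : Finset (Fin n)),
        Measure.dirac (fun i => if i ∈ S then (n : ℝ) / (τ : ℝ) else 0))
    -- `σ*`, `A` and `B`
    (σstar A B : ℝ)
    (hσstar : σstar = (n : ℝ)⁻¹ * ∑ i, (f i xstar - ⨅ y, f i y))
    (hAdef : A = ((n : ℝ) - τ) * Lmax / ((τ : ℝ) * ((n : ℝ) - 1)))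
    (hBdef : B = (n : ℝ) * ((τ : ℝ) - 1) / ((τ : ℝ) * ((n : ℝ) - 1))) :
    ∀ x, ∫ v, ‖sgrad f x v‖ ^ 2 ∂𝒟 ≤
      2 * A * (favg f x - ⨅ y, favg f y) + B * ‖gradient (favg f) x‖ ^ 2 + 2 * A * σstar := by
  intro x
  -- notation
  set g : Fin n → EuclideanSpace ℝ (Fin d) := fun i => gradient (f i) x with hgdef
  set G : EuclideanSpace ℝ (Fin d) := ∑ i, g i with hGdef
  set P : ℝ := ∑ i, ‖g i‖ ^ 2 with hPdef
  set N : ℕ := n.choose τ with hNdef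
  set K1 : ℕ := (n - 1).choose (τ - 1) with hK1def
  set K2 : ℕ := if τ = 1 then 0 else (n - 2).choose (τ - 2) with hK2def
  have hn0 : (n : ℝ) ≠ 0 := by positivity
  have hnpos : (0:ℝ) < n := by positivity
  have hτ0 : (τ : ℝ) ≠ 0 := by positivity
  have hτpos : (0:ℝ) < τ := by positivity
  have hn1 : (0:ℝ) < (n : ℝ) - 1 := by
    have : (2:ℝ) ≤ n := by exact_mod_cast hn
    linarith
  have hNpos : 0 < N := Nat.choose_pos hτn
  have hN0 : (N : ℝ) ≠ 0 := by
    have : (0:ℝ) < N := by exact_mod_cast hNpos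
    linarith
  -- continuity / measurability of the integrand
  have hcont : Continuous (fun v : Fin n → ℝ => ‖sgrad f x v‖ ^ 2) := by
    have h1 : Continuous (fun v : Fin n → ℝ => sgrad f x v) := by
      unfold sgrad
      exact (continuous_finset_sum _ fun i _ =>
        (continuous_apply i : Continuous fun v : Fin n → ℝ => v i).smul (continuous_const : Continuous fun _ : Fin n → ℝ => gradient (f i) x)).const_smul ((n : ℝ)⁻¹)
    exact (h1.norm.pow 2)
  -- Step 1 : compute the integral as a finite average
  have hint : ∫ v, ‖sgrad f x v‖ ^ 2 ∂𝒟
      = (N : ℝ)⁻¹ * ∑ S ∈ Finset.powersetCard τ (Finset.univ : Finset (Fin n)),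
          ‖sgrad f x (fun i => if i ∈ S then (n : ℝ) / (τ : ℝ) else 0)‖ ^ 2 := by
    rw [h𝒟, integral_smul_measure,
      integral_finset_sum_measure (fun S _ => integrable_dirac_of_sm hcont.stronglyMeasurable _)]
    simp only [integral_dirac]
    rw [smul_eq_mul]
    congr 1
    rw [ENNReal.toReal_inv]
    simp
  -- Step 2 : each sampled gradient
  have hvS : ∀ S : Finset (Fin n),
      ‖sgrad f x (fun i => if i ∈ S then (n : ℝ) / (τ : ℝ) else 0)‖ ^ 2
        = ((τ : ℝ)⁻¹) ^ 2 * ‖∑ i ∈ S, g i‖ ^ 2 := by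
    intro S
    have e1 : sgrad f x (fun i => if i ∈ S then (n : ℝ) / (τ : ℝ) else 0)
        = (τ : ℝ)⁻¹ • ∑ i ∈ S, g i := by
      unfold sgrad
      have e2 : ∑ i, (if i ∈ S then (n : ℝ) / (τ : ℝ) else 0) • gradient (f i) x
          = ((n : ℝ) / τ) • ∑ i ∈ S, g i := by
        rw [Finset.smul_sum]
        simp only [ite_smul, zero_smul]
        rw [Finset.sum_ite_mem, Finset.univ_inter]
      rw [e2, smul_smul]
      have e3 : (n : ℝ)⁻¹ * ((n : ℝ) / τ) = (τ : ℝ)⁻¹ := by field_simp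
      rw [e3]
    rw [e1, norm_smul, Real.norm_eq_abs, abs_of_nonneg (by positivity), mul_pow]
  -- Step 3 : the combinatorial identity
  have hsum : ∑ S ∈ Finset.powersetCard τ (Finset.univ : Finset (Fin n)), ‖∑ i ∈ S, g i‖ ^ 2
      = ((K1 : ℝ) - K2) * P + (K2 : ℝ) * ‖G‖ ^ 2 := by
    rw [sum_powersetCard_norm_sq g τ K1 K2 (fun i j => hcount_tau_nice τ hτ1 hτn i j)]
  have hint2 : ∫ v, ‖sgrad f x v‖ ^ 2 ∂𝒟
      = (N : ℝ)⁻¹ * ((τ : ℝ)⁻¹ ^ 2 * (((K1 : ℝ) - K2) * P + (K2 : ℝ) * ‖G‖ ^ 2)) := by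
    rw [hint, Finset.sum_congr rfl (fun S _ => hvS S), ← Finset.mul_sum, hsum]
  -- ratios
  have hr1 : (n : ℝ) * K1 = (N : ℝ) * τ := ratio1 hτ1 hτn
  have hr2 : (n : ℝ) * ((n : ℝ) - 1) * (K2 : ℝ) = (N : ℝ) * τ * ((τ : ℝ) - 1) :=
    ratio2 hn hτ1 hτn
  -- gradient of the average
  have hgavg : ‖G‖ ^ 2 = (n : ℝ) ^ 2 * ‖gradient (favg f) x‖ ^ 2 := by
    rw [gradient_favg f hdiff x, norm_smul, Real.norm_eq_abs, abs_of_nonneg (by positivity),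
      mul_pow, ← hGdef]
    field_simp
  -- infimum of favg is attained at xstar
  have hbddavg : BddBelow (Set.range (favg f)) := by
    refine ⟨favg f xstar, ?_⟩
    rintro z ⟨y, rfl⟩
    exact hmin y
  have hm : (⨅ y, favg f y) = favg f xstar :=
    le_antisymm (ciInf_le hbddavg xstar) (le_ciInf hmin)
  -- bound on P
  have hLmax0 : 0 ≤ Lmax := by
    obtain ⟨i, hi⟩ := hLmax_mem
    exact hi ▸ hLnonneg i
  have hPbound : P ≤ 2 * Lmax * ∑ i, (f i x - ⨅ y, f i y) := by
    rw [hPdef, Finset.mul_sum]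
    exact Finset.sum_le_sum fun i _ =>
      grad_sq_le_aux (hLnonneg i) (hLmax_ub i) (hdiff i) (hsmooth i) (hbelow i) x
  -- the coefficient of P
  set c1 : ℝ := (N : ℝ)⁻¹ * (τ : ℝ)⁻¹ ^ 2 * ((K1 : ℝ) - K2) with hc1def
  have hc1 : c1 = ((n : ℝ) - τ) / ((τ : ℝ) * n * ((n : ℝ) - 1)) := by
    rw [hc1def]
    field_simp
    linear_combination ((n:ℝ) - 1) * hr1 - hr2
  have hc1nonneg : 0 ≤ c1 := by
    rw [hc1]
    have : (τ : ℝ) ≤ n := by exact_mod_cast hτn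
    apply div_nonneg (by linarith) (by positivity)
  -- the coefficient of ‖∇favg‖²
  have hc2 : (N : ℝ)⁻¹ * (τ : ℝ)⁻¹ ^ 2 * ((K2 : ℝ) * ‖G‖ ^ 2)
      = B * ‖gradient (favg f) x‖ ^ 2 := by
    rw [hgavg, hBdef]
    field_simp
    linear_combination ‖gradient (favg f) x‖ ^ 2 * hr2
  -- put everything together
  have hsplit : ∫ v, ‖sgrad f x v‖ ^ 2 ∂𝒟 = c1 * P + B * ‖gradient (favg f) x‖ ^ 2 := by
    rw [hint2, ← hc2, hc1def]; ring
  rw [hsplit]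
  have hfinal : c1 * (2 * Lmax * ∑ i, (f i x - ⨅ y, f i y))
      = 2 * A * (favg f x - ⨅ y, favg f y) + 2 * A * σstar := by
    rw [hm, hc1, hAdef, hσstar]
    unfold favg
    rw [Finset.sum_sub_distrib, Finset.sum_sub_distrib]
    field_simp
    ring
  have hP2 : c1 * P ≤ c1 * (2 * Lmax * ∑ i, (f i x - ⨅ y, f i y)) :=
    mul_le_mul_of_nonneg_left hPbound hc1nonneg
  linarith [hP2, hfinal]


end
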